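/- arXiv:1202.0745 — 2 statements merged into one kernel-verified Lean document; each statement's English description precedes it below -/
import Mathlib

section
/- The injective hull E = E_R(k) is a semidualizing R-module if and only if R is an artinian ring, and this holds if and only if E is a noetherian R-module. -/
/-!
Setting: `R` is a commutative noetherian local ring with maximal ideal `m` and residue
field `k = R/m`; `E = E_R(k)` is the injective hull of `k`; `(-)^∨ = Hom_R(-, E)` is the
Matlis duality functor; `R̂ = AdicCompletion (maximalIdeal R) R` is the `m`-adic completion.
-/

open CategoryTheory IsLocalRing TensorProduct

noncomputable section

/-- The `i`-th Ext module `Ext^i_R(M, N)`. -/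
abbrev extMod (R : Type) [CommRing R] (M N : Type) [AddCommGroup M] [Module R M]
    [AddCommGroup N] [Module R N] (i : ℕ) : ModuleCat R :=
  ((Ext R (ModuleCat R) i).obj (Opposite.op (ModuleCat.of R M))).obj (ModuleCat.of R N)

/-- `E` is an injective hull of the residue field `k = R/m`: it is an injective module
containing `k` as an essential submodule. -/
def IsInjectiveHullOfResidueField (R : Type) [CommRing R] [IsLocalRing R]
    (E : Type) [AddCommGroup E] [Module R E] : Prop :=
  Module.Injective R E ∧
  ∃ f : ResidueField R →ₗ[R] E, Function.Injective f ∧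
    ∀ N : Submodule R E, N ≠ ⊥ → N ⊓ LinearMap.range f ≠ ⊥

/-- The natural biduality (evaluation) map `L → Hom_R(Hom_R(L, M), M)`, `l ↦ (φ ↦ φ l)`. -/
abbrev evalMap (R : Type) [CommRing R] (M L : Type) [AddCommGroup M] [Module R M]
    [AddCommGroup L] [Module R L] : L →ₗ[R] ((L →ₗ[R] M) →ₗ[R] M) :=
  LinearMap.applyₗ

/-- `L` is Matlis reflexive: the biduality map `L → L^∨∨` is an isomorphism. -/
def IsMatlisReflexive (R : Type) [CommRing R] (E L : Type) [AddCommGroup E] [Module R E]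
    [AddCommGroup L] [Module R L] : Prop :=
  Function.Bijective (evalMap R E L)

/-- A finitely generated `R`-module `C` is semidualizing if the homothety map
`R → Hom_R(C,C)`, `r ↦ (c ↦ r c)`, is an isomorphism and `Ext^i_R(C,C) = 0` for all
`i > 0`.  (Note `Module.End R C = C →ₗ[R] C` and `algebraMap R (Module.End R C)` is the
homothety map.) -/
def IsSemidualizing (R : Type) [CommRing R] (C : Type) [AddCommGroup C] [Module R C] : Prop :=
  Module.Finite R C ∧
  Function.Bijective (algebraMap R (Module.End R C)) ∧
  ∀ i : ℕ, 0 < i → Subsingleton (extMod R C C i)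

/-- An artinian `R`-module `T` is quasidualizing if the homothety map
`χ : R̂ → Hom_R(T,T)`, `x ↦ (t ↦ x • t)`, is an isomorphism and `Ext^i_R(T,T) = 0` for all
`i > 0`.  Here `T` is endowed with its natural `R̂`-module structure, recorded as a
`Module R̂ T` instance compatible with the `R`-structure (such a compatible structure is
unique for an artinian module, since artinian modules are `m`-power torsion). -/
def IsQuasidualizing (R : Type) [CommRing R] [IsLocalRing R]
    (T : Type) [AddCommGroup T] [Module R T]
    [Module (AdicCompletion (maximalIdeal R) R) T]
    [IsScalarTower R (AdicCompletion (maximalIdeal R) R) T] : Prop :=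
  IsArtinian R T ∧
  Function.Bijective (fun x : AdicCompletion (maximalIdeal R) R =>
    (LinearMap.lsmul (AdicCompletion (maximalIdeal R) R) T x).restrictScalars R) ∧
  ∀ i : ℕ, 0 < i → Subsingleton (extMod R T T i)

namespace MatlisHelpers

variable {R : Type} [CommRing R] [IsLocalRing R]
variable {E : Type} [AddCommGroup E] [Module R E]

/-- Extension through a linear map with a kernel condition, using injectivity of `E`. -/
theorem extend (hInj : Module.Injective R E) {A B : Type} [AddCommGroup A] [Module R A]
    [AddCommGroup B] [Module R B] (u : A →ₗ[R] B) (x : A →ₗ[R] E)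
    (h : LinearMap.ker u ≤ LinearMap.ker x) : ∃ y : B →ₗ[R] E, y ∘ₗ u = x := by
  obtain ⟨y, hy⟩ := hInj.out (LinearMap.range u).subtype (Submodule.injective_subtype _)
    ((Submodule.liftQ (LinearMap.ker u) x h) ∘ₗ u.quotKerEquivRange.symm.toLinearMap)
  refine ⟨y, LinearMap.ext fun a => ?_⟩
  have h1 : u.quotKerEquivRange.symm ⟨u a, LinearMap.mem_range_self u a⟩
      = Submodule.Quotient.mk a := by
    rw [LinearEquiv.symm_apply_eq]
    exact Subtype.ext (u.quotKerEquivRange_apply_mk a)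
  have h2 := hy ⟨u a, LinearMap.mem_range_self u a⟩
  simp only [Submodule.coe_subtype, LinearMap.coe_comp, Function.comp_apply,
    LinearEquiv.coe_coe, h1, Submodule.liftQ_apply] at h2
  exact h2

theorem smul_res (r : R) (c : ResidueField R) : r • c = residue R r * c := by
  rw [Algebra.smul_def]; rfl

theorem smul_res_one (r : R) : r • (1 : ResidueField R) = residue R r := by
  rw [smul_res, mul_one]

variable (f : ResidueField R →ₗ[R] E)

theorem range_le (hf : Function.Injective f)
    (hess : ∀ N : Submodule R E, N ≠ ⊥ → N ⊓ LinearMap.range f ≠ ⊥)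
    (N : Submodule R E) (hN : N ≠ ⊥) : LinearMap.range f ≤ N := by
  obtain ⟨y, hy, hy0⟩ := Submodule.exists_mem_ne_zero_of_ne_bot (hess N hN)
  rw [Submodule.mem_inf] at hy
  obtain ⟨hyN, c, rfl⟩ := hy
  have hc : c ≠ 0 := fun h => hy0 (by rw [h, map_zero])
  rintro z ⟨c', rfl⟩
  obtain ⟨r, hr⟩ := residue_surjective (c' * c⁻¹)
  have hc' : c' = r • c := by rw [smul_res, hr, inv_mul_cancel_right₀ hc]
  rw [hc', map_smul]
  exact N.smul_mem r hyN

theorem socle_mem (hf : Function.Injective f)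
    (hess : ∀ N : Submodule R E, N ≠ ⊥ → N ⊓ LinearMap.range f ≠ ⊥)
    (x : E) (hx : ∀ r ∈ maximalIdeal R, r • x = 0) : x ∈ LinearMap.range f := by
  rcases eq_or_ne x 0 with rfl | hx0
  · exact zero_mem _
  have hN : Submodule.span R {x} ≠ ⊥ := by
    simpa [Submodule.span_singleton_eq_bot] using hx0
  obtain ⟨y, hy, hy0⟩ := Submodule.exists_mem_ne_zero_of_ne_bot (hess _ hN)
  rw [Submodule.mem_inf] at hy
  obtain ⟨hy1, hy2⟩ := hy
  obtain ⟨a, rfl⟩ := Submodule.mem_span_singleton.mp hy1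
  have ha : IsUnit a := by
    by_contra h
    exact hy0 (hx a ((mem_maximalIdeal a).mpr h))
  have key : x = ((ha.unit⁻¹ : Rˣ) : R) • (a • x) := by
    rw [smul_smul]
    have h1 : ((ha.unit⁻¹ : Rˣ) : R) * a = 1 := ha.val_inv_mul
    rw [h1, one_smul]
  rw [key]
  exact Submodule.smul_mem _ _ hy2

theorem faithful (hInj : Module.Injective R E) (hf : Function.Injective f)
    (r : R) (hr : ∀ x : E, r • x = 0) : r = 0 := by
  by_contra hr0
  have he0 : f 1 ≠ 0 := fun h => one_ne_zero (hf (h.trans (map_zero f).symm))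
  have hker : LinearMap.ker (LinearMap.toSpanSingleton R R r)
      ≤ LinearMap.ker (LinearMap.toSpanSingleton R E (f 1)) := by
    intro a ha
    have haa : a • r = 0 := ha
    have ham : a ∈ maximalIdeal R := by
      by_contra h
      have hu : IsUnit a := by
        by_contra h2
        exact h ((mem_maximalIdeal a).mpr h2)
      rw [smul_eq_mul] at haa
      exact hr0 ((IsUnit.mul_right_eq_zero hu).mp haa)
    have hres : residue R a = 0 := Ideal.Quotient.eq_zero_iff_mem.mpr ham
    have : a • f 1 = 0 := by
      rw [← map_smul, smul_res_one, hres, map_zero]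
    exact this
  obtain ⟨y, hy⟩ := extend hInj (LinearMap.toSpanSingleton R R r)
    (LinearMap.toSpanSingleton R E (f 1)) hker
  have h1 : y r = f 1 := by
    have := congrArg (fun g : R →ₗ[R] E => g 1) hy
    simpa [LinearMap.toSpanSingleton_apply] using this
  have h2 : y r = 0 := by
    have : y r = r • y 1 := by rw [← map_smul, smul_eq_mul, mul_one]
    rw [this, hr]
  exact he0 (h1 ▸ h2)

theorem torsion [IsNoetherianRing R] (hf : Function.Injective f)
    (hess : ∀ N : Submodule R E, N ≠ ⊥ → N ⊓ LinearMap.range f ≠ ⊥) (x : E) :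
    ∃ n : ℕ, (maximalIdeal R) ^ n • Submodule.span R {x} = ⊥ := by
  by_contra h
  push_neg at h
  set M := Submodule.span R {x} with hM
  haveI : Module.Finite R M := ⟨(Submodule.fg_top _).mpr (Submodule.fg_span_singleton x)⟩
  have hK := Ideal.iInf_pow_smul_eq_bot_of_isLocalRing (R := R) (M := M)
      (I := maximalIdeal R) (Ideal.IsMaximal.ne_top inferInstance)
  have hle : ∀ n : ℕ, LinearMap.range f ≤ (maximalIdeal R) ^ n • M :=
    fun n => range_le f hf hess _ (h n)
  have hxM : f 1 ∈ M := Submodule.smul_le_right (hle 1 (LinearMap.mem_range_self f 1))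
  have hmem : ∀ n : ℕ, (⟨f 1, hxM⟩ : M) ∈ ((maximalIdeal R) ^ n • ⊤ : Submodule R M) := by
    intro n
    have h1 : f 1 ∈ Submodule.map M.subtype ((maximalIdeal R) ^ n • ⊤) := by
      rw [Submodule.map_smul'', Submodule.map_top, Submodule.range_subtype]
      exact hle n (LinearMap.mem_range_self f 1)
    obtain ⟨z, hz, hz2⟩ := h1
    have hz3 : z = ⟨f 1, hxM⟩ := Subtype.ext hz2
    rwa [← hz3]
  have h0 : (⟨f 1, hxM⟩ : M) = 0 := by
    have := (Submodule.mem_iInf _).mpr hmem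
    rwa [hK, Submodule.mem_bot] at this
  exact (fun h => one_ne_zero (hf (h.trans (map_zero f).symm)))
    (congrArg Subtype.val h0)

end MatlisHelpers

namespace MatlisHelpers2
set_option linter.unusedSectionVars false

variable {R : Type} [CommRing R] [IsLocalRing R]
variable {E : Type} [AddCommGroup E] [Module R E]

/-- fg module over noetherian local ring that is killed by the maximal ideal is artinian -/
theorem vs [IsNoetherianRing R] (M : Type) [AddCommGroup M] [Module R M]
    [Module.Finite R M] (h : maximalIdeal R • (⊤ : Submodule R M) = ⊥) : IsArtinian R M := by
  have htor : Module.IsTorsionBySet R M ((maximalIdeal R : Ideal R) : Set R) := by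
    intro x a
    have : (a : R) • x ∈ (⊥ : Submodule R M) := h ▸ Submodule.smul_mem_smul a.2 Submodule.mem_top
    simpa using this
  letI instk : Module (ResidueField R) M := htor.module
  have smul_eq : ∀ (r : R) (x : M), (residue R r) • x = r • x := fun r x => rfl
  haveI : Module.Finite (ResidueField R) M := by
    obtain ⟨s, hs⟩ := ‹Module.Finite R M›.fg_top
    refine ⟨⟨s, ?_⟩⟩
    rw [eq_top_iff]
    intro x _
    have hx : x ∈ Submodule.span R (s : Set M) := hs.symm ▸ Submodule.mem_top
    refine Submodule.span_induction (fun y hy => Submodule.subset_span hy)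
      (Submodule.zero_mem _) (fun y z _ _ hy hz => Submodule.add_mem _ hy hz)
      (fun r y _ hy => ?_) hx
    rw [← smul_eq]
    exact Submodule.smul_mem _ _ hy
  haveI : IsArtinian (ResidueField R) M := isArtinian_of_fg_of_artinian'
  let g : Submodule R M → Submodule (ResidueField R) M := fun N =>
    { carrier := N
      add_mem' := fun ha hb => N.add_mem ha hb
      zero_mem' := N.zero_mem
      smul_mem' := by
        rintro c x hx
        obtain ⟨r, rfl⟩ := residue_surjective c
        rw [smul_eq]
        exact N.smul_mem r hx }
  have hg : StrictMono g := fun N₁ N₂ h12 => by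
    rw [← SetLike.coe_ssubset_coe] at h12 ⊢
    exact h12
  exact hg.wellFoundedLT

theorem art [IsNoetherianRing R] :
    ∀ (N : ℕ) (M : Type) [AddCommGroup M] [Module R M] [Module.Finite R M],
      (maximalIdeal R) ^ N • (⊤ : Submodule R M) = ⊥ → IsArtinian R M := by
  intro N
  induction N with
  | zero =>
    intro M _ _ _ h
    rw [pow_zero, Ideal.one_eq_top, Submodule.top_smul] at h
    haveI : Subsingleton M := by
      refine subsingleton_of_forall_eq 0 fun x => ?_
      have : x ∈ (⊤ : Submodule R M) := Submodule.mem_top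
      rw [h] at this
      simpa using this
    infer_instance
  | succ N ih =>
    intro M _ _ _ h
    haveI : IsNoetherian R M := isNoetherian_of_isNoetherianRing_of_finite R M
    set M' : Submodule R M := maximalIdeal R • ⊤ with hM'def
    haveI : Module.Finite R M' := ⟨(Submodule.fg_top _).mpr (IsNoetherian.noetherian M')⟩
    have hM' : (maximalIdeal R) ^ N • (⊤ : Submodule R M') = ⊥ := by
      apply Submodule.map_injective_of_injective (Submodule.injective_subtype M')
      rw [Submodule.map_smul'', Submodule.map_top, Submodule.range_subtype, Submodule.map_bot,
        hM'def, ← Submodule.smul_assoc, smul_eq_mul, ← pow_succ, h]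
    haveI := ih M' hM'
    haveI : IsArtinian R (M ⧸ M') := by
      apply vs
      have h1 : maximalIdeal R • (⊤ : Submodule R (M ⧸ M'))
          = Submodule.map M'.mkQ (maximalIdeal R • ⊤) := by
        rw [Submodule.map_smul'', Submodule.map_top, Submodule.range_mkQ]
      rw [h1, ← hM'def, eq_bot_iff]
      rintro y ⟨z, hz, rfl⟩
      simpa [Submodule.Quotient.mk_eq_zero] using hz
    exact isArtinian_of_range_eq_ker M'.subtype M'.mkQ
      (by rw [Submodule.range_subtype, Submodule.ker_mkQ])

end MatlisHelpers2

namespace MatlisHelpers3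
set_option linter.unusedSectionVars false
set_option maxHeartbeats 1000000

variable {R : Type} [CommRing R] [IsLocalRing R]
variable {E : Type} [AddCommGroup E] [Module R E]
variable (f : ResidueField R →ₗ[R] E)

theorem simple_residueField : IsSimpleModule R (ResidueField R) :=
  isSimpleModule_iff_isCoatom.mpr ((Ideal.isMaximal_def).mp (maximalIdeal.isMaximal R))

/-- If the maximal ideal is nilpotent then `E` is a noetherian module. -/
theorem noe [IsNoetherianRing R] (hf : Function.Injective f)
    (hess : ∀ N : Submodule R E, N ≠ ⊥ → N ⊓ LinearMap.range f ≠ ⊥)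
    (socle : ∀ x : E, (∀ r ∈ maximalIdeal R, r • x = 0) → x ∈ LinearMap.range f)
    {n : ℕ} (hn : (maximalIdeal R) ^ n = ⊥) : IsNoetherian R E := by
  haveI := simple_residueField (R := R)
  haveI hsimple : IsSimpleModule R (LinearMap.range f) :=
    IsSimpleModule.congr (LinearEquiv.ofInjective f hf).symm
  set T : ℕ → Submodule R E :=
    fun i => Submodule.torsionBySet R E (((maximalIdeal R) ^ i : Ideal R) : Set R) with hT
  have claim : ∀ i, IsNoetherian R (T i) := by
    intro i
    induction i with
    | zero =>
      have hbot : T 0 = ⊥ := by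
        rw [eq_bot_iff]
        intro x hx
        rw [hT] at hx
        have h1 := (Submodule.mem_torsionBySet_iff _ x).mp hx
          ⟨1, by rw [pow_zero, Ideal.one_eq_top]; trivial⟩
        simpa using h1
      rw [hbot]
      infer_instance
    | succ i ih =>
      obtain ⟨t, g, hg⟩ := Submodule.fg_iff_exists_fin_generating_family.mp
        (IsNoetherian.noetherian ((maximalIdeal R) ^ i : Ideal R))
      -- the map to (range f)^t
      have hmem : ∀ (x : T (i + 1)) (j : Fin t), g j • (x : E) ∈ LinearMap.range f := by
        intro x j
        apply socle
        intro r hr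
        have hgj : g j ∈ (maximalIdeal R) ^ i := hg ▸ Submodule.subset_span ⟨j, rfl⟩
        have hmul : r * g j ∈ (maximalIdeal R) ^ (i + 1) := by
          rw [pow_succ']
          exact Ideal.mul_mem_mul hr hgj
        have := (Submodule.mem_torsionBySet_iff _ (x : E)).mp x.2 ⟨r * g j, hmul⟩
        rw [smul_smul]
        exact this
      let Φ : T (i + 1) →ₗ[R] (Fin t → LinearMap.range f) :=
        LinearMap.pi fun j =>
          { toFun := fun x => ⟨g j • (x : E), hmem x j⟩
            map_add' := fun a b => by ext; simp [smul_add]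
            map_smul' := fun r a => by ext; simp [smul_comm r (g j)] }
      have hTle : T i ≤ T (i + 1) := Submodule.torsionBySet_le_torsionBySet_of_subset
        (by exact_mod_cast Ideal.pow_le_pow_right (Nat.le_succ i))
      have hrk : LinearMap.range (Submodule.inclusion hTle) = LinearMap.ker Φ := by
        ext x
        rw [Submodule.range_inclusion]
        constructor
        · intro hx
          rw [LinearMap.mem_ker]
          ext j
          have := (Submodule.mem_torsionBySet_iff _ (x : E)).mp hx
            ⟨g j, hg ▸ Submodule.subset_span ⟨j, rfl⟩⟩
          simpa [Φ] using this
        · intro hx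
          have hx' : ∀ j, g j • (x : E) = 0 := by
            intro j
            have := congrFun (LinearMap.mem_ker.mp hx) j
            simpa [Φ, Subtype.ext_iff] using this
          show (x : E) ∈ Submodule.torsionBySet R E (((maximalIdeal R) ^ i : Ideal R) : Set R)
          rw [Submodule.mem_torsionBySet_iff]
          have key : ∀ a ∈ Submodule.span R (Set.range g), a • (x : E) = 0 := by
            intro a ha
            refine Submodule.span_induction (fun y hy => ?_) (by simp)
              (fun y z _ _ hy hz => by rw [add_smul, hy, hz, add_zero])
              (fun r y _ hy => by rw [smul_eq_mul, mul_smul, hy, smul_zero]) ha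
            obtain ⟨j, rfl⟩ := hy
            exact hx' j
          rintro ⟨a, ha⟩
          exact key a (by rwa [hg])
      haveI := ih
      exact isNoetherian_of_range_eq_ker (Submodule.inclusion hTle) Φ hrk
  have hTn : T n = ⊤ := by
    rw [eq_top_iff]
    intro x _
    rw [hT, Submodule.mem_torsionBySet_iff]
    rintro ⟨a, ha⟩
    rw [hn] at ha
    simp [(Submodule.mem_bot R).mp ha]
  have h1 : IsNoetherian R (⊤ : Submodule R E) := hTn ▸ claim n
  exact isNoetherian_of_linearEquiv (Submodule.topEquiv (R := R) (M := E))

end MatlisHelpers3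

namespace MatlisHelpers4

variable {R : Type} [CommRing R] [IsLocalRing R]
variable {E : Type} [AddCommGroup E] [Module R E]

theorem extend (hInj : Module.Injective R E) {A B : Type} [AddCommGroup A] [Module R A]
    [AddCommGroup B] [Module R B] (u : A →ₗ[R] B) (x : A →ₗ[R] E)
    (h : LinearMap.ker u ≤ LinearMap.ker x) : ∃ y : B →ₗ[R] E, y ∘ₗ u = x := by
  obtain ⟨y, hy⟩ := hInj.out (LinearMap.range u).subtype (Submodule.injective_subtype _)
    ((Submodule.liftQ (LinearMap.ker u) x h) ∘ₗ u.quotKerEquivRange.symm.toLinearMap)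
  refine ⟨y, LinearMap.ext fun a => ?_⟩
  have h1 : u.quotKerEquivRange.symm ⟨u a, LinearMap.mem_range_self u a⟩
      = Submodule.Quotient.mk a := by
    rw [LinearEquiv.symm_apply_eq]
    exact Subtype.ext (u.quotKerEquivRange_apply_mk a)
  have h2 := hy ⟨u a, LinearMap.mem_range_self u a⟩
  simp only [Submodule.coe_subtype, LinearMap.coe_comp, Function.comp_apply,
    LinearEquiv.coe_coe, h1, Submodule.liftQ_apply] at h2
  exact h2

theorem smul_res' (r : R) (c : ResidueField R) : r • c = residue R r * c := by
  rw [Algebra.smul_def]; rfl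

theorem res_ext {φ ψ : ResidueField R →ₗ[R] E} (h : φ 1 = ψ 1) : φ = ψ := by
  ext c
  obtain ⟨r, rfl⟩ := residue_surjective c
  have h1 : residue R r = r • (1 : ResidueField R) := by rw [smul_res', mul_one]
  rw [h1, map_smul, map_smul, h]

theorem surj_k (f : ResidueField R →ₗ[R] E) (hf : Function.Injective f)
    (socle : ∀ x : E, (∀ r ∈ maximalIdeal R, r • x = 0) → x ∈ LinearMap.range f) :
    Function.Surjective (evalMap R E (ResidueField R)) := by
  intro ξ
  have hgen : ∀ φ : ResidueField R →ₗ[R] E, ∃ s : R, φ = s • f := by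
    intro φ
    have hφ1 : ∀ r ∈ maximalIdeal R, r • φ 1 = 0 := by
      intro r hr
      have hres : residue R r = 0 := Ideal.Quotient.eq_zero_iff_mem.mpr hr
      rw [← map_smul, smul_res', mul_one, hres, map_zero]
    obtain ⟨c, hc⟩ := socle (φ 1) hφ1
    obtain ⟨s, rfl⟩ := residue_surjective c
    refine ⟨s, res_ext ?_⟩
    rw [LinearMap.smul_apply, ← map_smul, smul_res', mul_one, hc]
  have hx : ∀ r ∈ maximalIdeal R, r • ξ f = 0 := by
    intro r hr
    have hrf : r • f = 0 := by
      ext c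
      have hres : residue R r = 0 := Ideal.Quotient.eq_zero_iff_mem.mpr hr
      rw [LinearMap.smul_apply, ← map_smul, smul_res', hres, zero_mul, map_zero,
        LinearMap.zero_apply]
    rw [← map_smul, hrf, map_zero]
  obtain ⟨c₁, hc₁⟩ := socle (ξ f) hx
  refine ⟨c₁, ?_⟩
  ext φ
  obtain ⟨s, rfl⟩ := hgen φ
  show (s • f) c₁ = ξ (s • f)
  rw [map_smul, LinearMap.smul_apply, hc₁]

theorem surj_simple (f : ResidueField R →ₗ[R] E) (hf : Function.Injective f)
    (socle : ∀ x : E, (∀ r ∈ maximalIdeal R, r • x = 0) → x ∈ LinearMap.range f)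
    (B : Type) [AddCommGroup B] [Module R B] [IsSimpleModule R B] :
    Function.Surjective (evalMap R E B) := by
  obtain ⟨I, hI, ⟨e⟩⟩ := isSimpleModule_iff_quot_maximal.mp ‹IsSimpleModule R B›
  have hIm : I = maximalIdeal R := IsLocalRing.eq_maximalIdeal hI
  subst hIm
  have e' : B ≃ₗ[R] ResidueField R := e
  intro ξ
  let ξ' : (ResidueField R →ₗ[R] E) →ₗ[R] E :=
    ξ ∘ₗ (LinearMap.lcomp R E e'.toLinearMap)
  obtain ⟨c, hc⟩ := surj_k f hf socle ξ'
  refine ⟨e'.symm c, ?_⟩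
  ext φ
  have h1 := congrArg (fun g => g (φ ∘ₗ e'.symm.toLinearMap)) hc
  simp only [evalMap, LinearMap.applyₗ_apply_apply] at h1 ⊢
  simp only [LinearMap.coe_comp, Function.comp_apply, LinearEquiv.coe_coe,
    LinearEquiv.apply_symm_apply] at h1
  rw [h1]
  simp only [ξ', LinearMap.coe_comp, Function.comp_apply, LinearMap.lcomp_apply']
  congr 1
  ext b
  simp

theorem surj_main (hInj : Module.Injective R E) (f : ResidueField R →ₗ[R] E)
    (hf : Function.Injective f)
    (socle : ∀ x : E, (∀ r ∈ maximalIdeal R, r • x = 0) → x ∈ LinearMap.range f) :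
    ∀ (M : Type) [AddCommGroup M] [Module R M], IsFiniteLength R M →
      Function.Surjective (evalMap R E M) := by
  intro M _ _ h
  induction h with
  | of_subsingleton =>
    rename_i M' _ _ _
    intro ξ
    refine ⟨0, ?_⟩
    ext φ
    have hφ : φ = 0 := LinearMap.ext fun x => by
      rw [Subsingleton.elim x 0, map_zero, LinearMap.zero_apply]
    simp [hφ]
  | of_simple_quotient h ih =>
    rename_i M' _ _ N _
    intro ξ
    let Dg : ((M' ⧸ N) →ₗ[R] E) →ₗ[R] (M' →ₗ[R] E) := LinearMap.lcomp R E N.mkQ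
    obtain ⟨b, hb⟩ := surj_simple f hf socle (M' ⧸ N) (ξ ∘ₗ Dg)
    obtain ⟨m₀, rfl⟩ := N.mkQ_surjective b
    set ξ' : (M' →ₗ[R] E) →ₗ[R] E := ξ - evalMap R E M' m₀ with hξ'def
    have hξ' : ∀ h : (M' ⧸ N) →ₗ[R] E, ξ' (h ∘ₗ N.mkQ) = 0 := by
      intro h
      have h1 := congrArg (fun g => g h) hb
      simp only [evalMap, LinearMap.applyₗ_apply_apply, LinearMap.coe_comp,
        Function.comp_apply, Dg, LinearMap.lcomp_apply'] at h1
      simp only [hξ'def, LinearMap.sub_apply, evalMap, LinearMap.applyₗ_apply_apply]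
      rw [← h1]
      simp [Dg]
    let ρ : (M' →ₗ[R] E) →ₗ[R] ((N : Submodule R M') →ₗ[R] E) := LinearMap.lcomp R E N.subtype
    have hρsurj : Function.Surjective ρ := by
      intro ψ
      obtain ⟨y, hy⟩ := extend hInj N.subtype ψ
        (by rw [Submodule.ker_subtype]; exact bot_le)
      exact ⟨y, hy⟩
    have hker : LinearMap.ker ρ ≤ LinearMap.ker ξ' := by
      intro φ hφ
      have hN : N ≤ LinearMap.ker φ := by
        intro z hz
        have h2 := congrArg (fun g => g (⟨z, hz⟩ : N)) (LinearMap.mem_ker.mp hφ)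
        simpa [ρ] using h2
      have hfac : φ = (N.liftQ φ hN) ∘ₗ N.mkQ := (Submodule.liftQ_mkQ N φ hN).symm
      rw [LinearMap.mem_ker, hfac]
      exact hξ' _
    let eq1 := ρ.quotKerEquivOfSurjective hρsurj
    let ξ'' : ((N : Submodule R M') →ₗ[R] E) →ₗ[R] E :=
      (Submodule.liftQ (LinearMap.ker ρ) ξ' hker) ∘ₗ eq1.symm.toLinearMap
    have hξ'' : ∀ φ : M' →ₗ[R] E, ξ'' (ρ φ) = ξ' φ := by
      intro φ
      have h1 : eq1 (Submodule.Quotient.mk φ) = ρ φ := by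
        simp only [eq1, LinearMap.quotKerEquivOfSurjective, LinearEquiv.trans_apply,
          LinearEquiv.ofTop_apply]
        exact ρ.quotKerEquivRange_apply_mk φ
      have h2 : eq1.symm (ρ φ) = Submodule.Quotient.mk φ := by
        rw [LinearEquiv.symm_apply_eq, h1]
      simp only [ξ'', LinearMap.coe_comp, Function.comp_apply, LinearEquiv.coe_coe, h2,
        Submodule.liftQ_apply]
    obtain ⟨a, ha⟩ := ih ξ''
    refine ⟨m₀ + (a : M'), ?_⟩
    ext φ
    simp only [evalMap, LinearMap.applyₗ_apply_apply, map_add]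
    have h3 : φ (a : M') = ξ' φ := by
      have h4 := congrArg (fun g => g (ρ φ)) ha
      simp only [evalMap, LinearMap.applyₗ_apply_apply] at h4
      rw [hξ''] at h4
      simpa [ρ] using h4
    simp only [LinearMap.add_apply, LinearMap.applyₗ_apply_apply]
    rw [h3, hξ'def]
    simp only [LinearMap.sub_apply, evalMap, LinearMap.applyₗ_apply_apply]
    abel

end MatlisHelpers4

namespace MatlisHelpers5

variable {R : Type} [CommRing R]
variable {E : Type} [AddCommGroup E] [Module R E]

theorem extend' (hInj : Module.Injective R E) {A B : Type} [AddCommGroup A] [Module R A]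
    [AddCommGroup B] [Module R B] (u : A →ₗ[R] B) (x : A →ₗ[R] E)
    (h : LinearMap.ker u ≤ LinearMap.ker x) : ∃ y : B →ₗ[R] E, y ∘ₗ u = x := by
  obtain ⟨y, hy⟩ := hInj.out (LinearMap.range u).subtype (Submodule.injective_subtype _)
    ((Submodule.liftQ (LinearMap.ker u) x h) ∘ₗ u.quotKerEquivRange.symm.toLinearMap)
  refine ⟨y, LinearMap.ext fun a => ?_⟩
  have h1 : u.quotKerEquivRange.symm ⟨u a, LinearMap.mem_range_self u a⟩
      = Submodule.Quotient.mk a := by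
    rw [LinearEquiv.symm_apply_eq]
    exact Subtype.ext (u.quotKerEquivRange_apply_mk a)
  have h2 := hy ⟨u a, LinearMap.mem_range_self u a⟩
  simp only [Submodule.coe_subtype, LinearMap.coe_comp, Function.comp_apply,
    LinearEquiv.coe_coe, h1, Submodule.liftQ_apply] at h2
  exact h2

theorem ext_vanish (hInj : Module.Injective R E) (i : ℕ) (hi : 0 < i) :
    Subsingleton (extMod R E E i) := by
  obtain ⟨j, rfl⟩ : ∃ j, i = j + 1 := ⟨i - 1, (Nat.succ_pred_eq_of_pos hi).symm⟩
  let X : ModuleCat R := ModuleCat.of R E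
  let P := CategoryTheory.ProjectiveResolution.of X
  let K := P.complex.linearYonedaObj R X
  have hzero : Limits.IsZero (K.homology (j + 1)) := by
    rw [← HomologicalComplex.exactAt_iff_isZero_homology]
    rw [HomologicalComplex.exactAt_iff' K j (j + 1) (j + 2) (by simp) (by simp)]
    rw [ShortComplex.moduleCat_exact_iff]
    simp only [HomologicalComplex.shortComplexFunctor'_obj_X₁,
      HomologicalComplex.shortComplexFunctor'_obj_X₂, HomologicalComplex.shortComplexFunctor'_obj_X₃,
      HomologicalComplex.shortComplexFunctor'_obj_f, HomologicalComplex.shortComplexFunctor'_obj_g]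
    intro x hx
    let xm : P.complex.X (j + 1) ⟶ X := x
    -- x is a linear map P_{j+1} → E with x ∘ d_{j+2,j+1} = 0
    have hP := P.complex_exactAt_succ j
    rw [HomologicalComplex.exactAt_iff' P.complex (j + 2) (j + 1) j (by simp) (by simp)] at hP
    rw [ShortComplex.moduleCat_exact_iff_ker_sub_range] at hP
    simp only [HomologicalComplex.shortComplexFunctor'_obj_f,
      HomologicalComplex.shortComplexFunctor'_obj_g] at hP
    have hdx : P.complex.d (j + 2) (j + 1) ≫ xm = 0 := by
      have h0 : K.d (j + 1) (j + 2) x = 0 := hx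
      rwa [ChainComplex.linearYonedaObj_d] at h0
    have hcond : LinearMap.ker (P.complex.d (j + 1) j).hom
        ≤ LinearMap.ker xm.hom := by
      intro z hz
      obtain ⟨w, hw⟩ := hP hz
      have h1 : xm (P.complex.d (j + 2) (j + 1) w) = 0 := by
        have h0 := congrArg (fun (g : P.complex.X (j + 2) ⟶ X) => g w) hdx
        exact h0
      rw [LinearMap.mem_ker, ← hw]
      exact h1
    obtain ⟨y, hy⟩ := extend' hInj (P.complex.d (j + 1) j).hom xm.hom hcond
    refine ⟨ModuleCat.ofHom y, ?_⟩
    show K.d j (j + 1) (ModuleCat.ofHom y) = x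
    rw [ChainComplex.linearYonedaObj_d]
    exact ModuleCat.hom_ext hy
  haveI hsub : Subsingleton (K.homology (j + 1)) :=
    Equiv.subsingleton
      ((hzero.iso (ModuleCat.isZero_of_subsingleton (ModuleCat.of R PUnit))).toLinearEquiv.toEquiv)
  exact Equiv.subsingleton ((P.isoExt (j + 1) X).toLinearEquiv.toEquiv)


end MatlisHelpers5


section MatlisAssembly

set_option linter.unusedSectionVars false
set_option linter.unusedVariables false
set_option maxHeartbeats 1000000

open MatlisHelpers MatlisHelpers2 MatlisHelpers3 MatlisHelpers4 MatlisHelpers5 in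
theorem matlis_torsion_fin {R : Type} [CommRing R] [IsLocalRing R] [IsNoetherianRing R]
    {E : Type} [AddCommGroup E] [Module R E] (f : ResidueField R →ₗ[R] E)
    (hf : Function.Injective f)
    (hess : ∀ N : Submodule R E, N ≠ ⊥ → N ⊓ LinearMap.range f ≠ ⊥) (s : Finset E) :
    ∃ n : ℕ, (maximalIdeal R) ^ n • Submodule.span R (s : Set E) = ⊥ := by
  classical
  induction s using Finset.induction_on with
  | empty => exact ⟨0, by simp⟩
  | @insert a s ha ih =>
    obtain ⟨n₁, h₁⟩ := MatlisHelpers.torsion f hf hess a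
    obtain ⟨n₂, h₂⟩ := ih
    refine ⟨max n₁ n₂, ?_⟩
    rw [Finset.coe_insert, Submodule.span_insert, Submodule.smul_sup]
    have e1 : (maximalIdeal R) ^ max n₁ n₂ • Submodule.span R {a} ≤ ⊥ :=
      h₁ ▸ Submodule.smul_mono_left (Ideal.pow_le_pow_right (le_max_left n₁ n₂))
    have e2 : (maximalIdeal R) ^ max n₁ n₂ • Submodule.span R (s : Set E) ≤ ⊥ :=
      h₂ ▸ Submodule.smul_mono_left (Ideal.pow_le_pow_right (le_max_right n₁ n₂))
    rw [le_bot_iff.mp e1, le_bot_iff.mp e2, sup_idem]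

end MatlisAssembly

/-- **(Part of Proposition 2.2.)**  The injective hull `E = E_R(k)` is a semidualizing
`R`-module if and only if `R` is an artinian ring, and this holds if and only if `E`
is a noetherian `R`-module. -/
theorem isSemidualizing_injectiveHull_iff
    (R : Type) [CommRing R] [IsNoetherianRing R] [IsLocalRing R]
    (E : Type) [AddCommGroup E] [Module R E]
    (hE : IsInjectiveHullOfResidueField R E) :
    (IsSemidualizing R E ↔ IsArtinianRing R) ∧
    (IsSemidualizing R E ↔ IsNoetherian R E) := by
  classical
  obtain ⟨hInj, f, hf, hess⟩ := hE
  have socle : ∀ x : E, (∀ r ∈ maximalIdeal R, r • x = 0) → x ∈ LinearMap.range f :=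
    fun x hx => MatlisHelpers.socle_mem f hf hess x hx
  -- a finitely generated `E` forces `R` to be artinian
  have keyFin : Module.Finite R E → IsArtinianRing R := by
    intro hfin
    obtain ⟨s, hs⟩ := hfin.fg_top
    obtain ⟨n, hn⟩ := matlis_torsion_fin f hf hess s
    rw [hs] at hn
    have hmn : (maximalIdeal R) ^ n = ⊥ := by
      rw [eq_bot_iff]
      intro r hr
      have hr0 : ∀ x : E, r • x = 0 := fun x => by
        have hmem : r • x ∈ (maximalIdeal R) ^ n • (⊤ : Submodule R E) :=
          Submodule.smul_mem_smul hr Submodule.mem_top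
        rw [hn] at hmem
        simpa using hmem
      have := MatlisHelpers.faithful f hInj hf r hr0
      simp [this]
    rw [isArtinianRing_iff]
    exact MatlisHelpers2.art n R (by rw [smul_eq_mul, Ideal.mul_top]; exact hmn)
  -- if `R` is artinian, `E` is a noetherian module
  have keyNoeth : IsArtinianRing R → IsNoetherian R E := by
    intro hart
    obtain ⟨n, hn⟩ := @IsArtinianRing.isNilpotent_jacobson_bot R _ hart
    rw [IsLocalRing.jacobson_eq_maximalIdeal (⊥ : Ideal R) bot_ne_top] at hn
    exact MatlisHelpers3.noe f hf hess socle hn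
  -- if `R` is artinian, `E` is semidualizing
  have keySemi : IsArtinianRing R → IsSemidualizing R E := by
    intro hart
    haveI := hart
    haveI hnoe : IsNoetherian R E := keyNoeth hart
    haveI hfin : Module.Finite R E := ⟨IsNoetherian.noetherian ⊤⟩
    refine ⟨hfin, ⟨?_, ?_⟩, fun i hi => MatlisHelpers5.ext_vanish hInj i hi⟩
    · -- injectivity of the homothety map
      intro a b hab
      have hab' : ∀ x : E, (a - b) • x = 0 := fun x => by
        have h1 := congrArg (fun g : Module.End R E => g x) hab
        simp only [Module.algebraMap_end_apply] at h1
        rw [sub_smul, h1, sub_self]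
      exact sub_eq_zero.mp (MatlisHelpers.faithful f hInj hf _ hab')
    · -- surjectivity of the homothety map
      intro φ
      have hfl : IsFiniteLength R R :=
        isFiniteLength_iff_isNoetherian_isArtinian.mpr ⟨inferInstance, hart⟩
      obtain ⟨r, hr⟩ := MatlisHelpers4.surj_main hInj f hf socle R hfl
        (φ ∘ₗ (LinearMap.applyₗ (1 : R) : (R →ₗ[R] E) →ₗ[R] E))
      refine ⟨r, ?_⟩
      apply LinearMap.ext
      intro e
      have h1 := congrArg (fun g => g (LinearMap.toSpanSingleton R E e)) hr
      simp only [evalMap, LinearMap.applyₗ_apply_apply, LinearMap.coe_comp,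
        Function.comp_apply, LinearMap.toSpanSingleton_apply, one_smul] at h1
      rw [Module.algebraMap_end_apply]
      exact h1
  constructor
  · exact ⟨fun h => keyFin h.1, keySemi⟩
  · constructor
    · intro h
      exact keyNoeth (keyFin h.1)
    · intro h
      haveI := h
      exact keySemi (keyFin ⟨IsNoetherian.noetherian ⊤⟩)
end
end

section
/- If there exists an R-module L that is both semidualizing and quasidualizing, then R is an artinian ring. (Indeed, such an L is both noetherian and artinian, hence of finite length with Supp_R(L) ⊆ {m}, while Ann_R(L) = 0 forces Supp_R(L) = Spec(R), so Spec(R) = {m}.) -/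
/-!
Setting: `R` is a commutative noetherian local ring with maximal ideal `m` and residue
field `k = R/m`; `E = E_R(k)` is the injective hull of `k`; `(-)^∨ = Hom_R(-, E)` is the
Matlis duality functor; `R̂ = AdicCompletion (maximalIdeal R) R` is the `m`-adic completion.
-/

open CategoryTheory IsLocalRing TensorProduct

noncomputable section

/-- **(Part of Proposition 2.2.)**  If there is an `R`-module `L` that is both
semidualizing and quasidualizing, then `R` is an artinian ring. -/
theorem isArtinianRing_of_isSemidualizing_isQuasidualizing
    (R : Type) [CommRing R] [IsNoetherianRing R] [IsLocalRing R]
    (L : Type) [AddCommGroup L] [Module R L]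
    [Module (AdicCompletion (maximalIdeal R) R) L]
    [IsScalarTower R (AdicCompletion (maximalIdeal R) R) L]
    (h1 : IsSemidualizing R L) (h2 : IsQuasidualizing R L) :
    IsArtinianRing R := by
  obtain ⟨hfin, hbij, -⟩ := h1
  obtain ⟨hart, -, -⟩ := h2
  obtain ⟨n, s, hs⟩ := Module.Finite.exists_fin (R := R) (M := L)
  have : IsArtinian R L := hart
  let f : R →ₗ[R] (Fin n → L) := LinearMap.pi fun i => LinearMap.toSpanSingleton R L (s i)
  have hinj : Function.Injective f := by
    rw [← LinearMap.ker_eq_bot, LinearMap.ker_eq_bot']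
    intro r hr
    have hse : (algebraMap R (Module.End R L)) r = 0 := by
      apply LinearMap.ext
      intro x
      have hx : x ∈ Submodule.span R (Set.range s) := hs ▸ Submodule.mem_top
      refine Submodule.span_induction ?_ ?_ ?_ ?_ hx
      · rintro y ⟨i, rfl⟩
        simpa [f] using congrFun hr i
      · simp
      · intro a b _ _ ha hb
        show r • (a + b) = 0
        rw [smul_add, show r • a = 0 from ha, show r • b = 0 from hb, add_zero]
      · intro c a _ ha
        show r • c • a = 0
        rw [smul_comm, show r • a = 0 from ha, smul_zero]
    have : (algebraMap R (Module.End R L)) r = (algebraMap R (Module.End R L)) 0 := by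
      simpa using hse
    exact hbij.1 this
  have : IsArtinian R R := isArtinian_of_injective f hinj
  exact this
end
end
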